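/- Let (0, x₂, x₃) be a point of the discriminant locus of the Harvey–Lawson map, i.e. (0, x₂, x₃) ∈ {(0, t, t) : t ≥ 0} ∪ {(0, t, 0) : t ≤ 0} ∪ {(0, 0, t) : t ≤ 0}, with (x₂, x₃) ≠ (0, 0). Then each of the two subsets f⁻¹((0, x₂, x₃))⁺ = f⁻¹({(0, x₂, x₃)}) ∩ {z : Re(z₁z₂z₃) ≥ 0} and f⁻¹((0, x₂, x₃))⁻ = f⁻¹({(0, x₂, x₃)}) ∩ {z : Re(z₁z₂z₃) ≤ 0} is homeomorphic to S¹ × ℝ², where S¹ denotes the unit circle in ℂ. -/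

import Mathlib

open Complex

/-- The Harvey–Lawson map `f : ℂ³ → ℝ³`. -/
noncomputable def HarveyLawson (z : Fin 3 → ℂ) : Fin 3 → ℝ :=
  ![(z 0 * z 1 * z 2).im,
    ‖z 0‖ ^ 2 - ‖z 1‖ ^ 2,
    ‖z 0‖ ^ 2 - ‖z 2‖ ^ 2]

/-- The discriminant locus of the Harvey–Lawson fibration: three rays in the plane
`{x₁ = 0} ⊂ ℝ³`. -/
def HLDiscriminant : Set (Fin 3 → ℝ) :=
  {x : Fin 3 → ℝ | ∃ t : ℝ, 0 ≤ t ∧ x = ![0, t, t]} ∪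
  {x : Fin 3 → ℝ | ∃ t : ℝ, t ≤ 0 ∧ x = ![0, t, 0]} ∪
  {x : Fin 3 → ℝ | ∃ t : ℝ, t ≤ 0 ∧ x = ![0, 0, t]}


lemma HL_sq_eq {x y : ℝ} (hx : 0 ≤ x) (hy : 0 ≤ y) (h : x ^ 2 = y ^ 2) : x = y := by
  nlinarith

lemma HL_sign_iff (ε : ℂ) (hε : ε = 1 ∨ ε = -1) (P : ℂ) :
    (P.im = 0 ∧ 0 ≤ ε.re * P.re) ↔ P = ε * (‖P‖ : ℂ) := by
  have hPre : P = (P.re : ℂ) ↔ P.im = 0 := by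
    constructor
    · intro h; rw [h]; simp
    · intro h; exact Complex.ext (by simp) (by simp [h])
  rcases hε with rfl | rfl
  · simp only [Complex.one_re, one_mul]
    constructor
    · rintro ⟨him, hre⟩
      have : P = (P.re : ℂ) := hPre.mpr him
      rw [this]
      norm_cast
      rw [this]
      simp [Complex.norm_real, Real.norm_eq_abs, _root_.abs_of_nonneg hre]
    · intro h
      constructor
      · rw [h]; simp
      · rw [h]; simp
  · simp only [Complex.neg_re, Complex.one_re]
    constructor
    · rintro ⟨him, hre⟩
      have hre' : P.re ≤ 0 := by nlinarith
      have : P = (P.re : ℂ) := hPre.mpr him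
      rw [this, Complex.norm_real, Real.norm_eq_abs, abs_of_nonpos hre']
      push_cast
      ring
    · intro h
      constructor
      · rw [h]; simp
      · rw [h]; simp

lemma HL_helperA (t : ℝ) (ht : 0 < t) (ε : ℂ) (hε : ε = 1 ∨ ε = -1) (u v w : ℂ) :
    (u * v * w = ε * (‖u * v * w‖ : ℂ) ∧
      ‖u‖ ^ 2 - ‖v‖ ^ 2 = t ∧
      ‖u‖ ^ 2 - ‖w‖ ^ 2 = t) ↔
    (‖u‖ ^ 2 = ‖v‖ ^ 2 + t ∧
      u * w = ε * (starRingEnd ℂ) v * (‖u‖ : ℂ)) := by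
  have hεa : ‖ε‖ = 1 := by rcases hε with rfl | rfl <;> simp
  have hvc : ∀ x : ℂ, x * (starRingEnd ℂ) x = (‖x‖ : ℂ) ^ 2 := by
    intro x; rw [Complex.mul_conj]; norm_cast; rw [Complex.sq_norm]
  constructor
  · rintro ⟨hP, h1, h2⟩
    have hvw : ‖v‖ = ‖w‖ :=
      HL_sq_eq (norm_nonneg _) (norm_nonneg _) (by linarith)
    refine ⟨by linarith, ?_⟩
    rcases eq_or_ne v 0 with rfl | hv
    · have hw : w = 0 := by
        have : ‖w‖ = 0 := by simpa using hvw.symm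
        simpa using this
      simp [hw]
    · apply mul_left_cancel₀ hv
      have habs : (‖u * v * w‖ : ℝ) = ‖u‖ * ‖v‖ ^ 2 := by
        simp [norm_mul, ← hvw]; ring
      calc v * (u * w) = u * v * w := by ring
        _ = ε * ((‖u‖ * ‖v‖ ^ 2 : ℝ) : ℂ) := by rw [hP, habs]
        _ = v * (ε * (starRingEnd ℂ) v * (‖u‖ : ℂ)) := by
            push_cast
            linear_combination (-(ε * (‖u‖ : ℂ))) * (hvc v)
  · rintro ⟨h1, h2⟩
    have hu : ‖u‖ ≠ 0 := by
      intro h; rw [h] at h1; nlinarith [norm_nonneg v]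
    have hvw : ‖w‖ = ‖v‖ := by
      have := congrArg norm h2
      simp only [norm_mul, Complex.norm_conj, Complex.norm_real, Real.norm_eq_abs, hεa,
        _root_.abs_of_nonneg (norm_nonneg u), one_mul] at this
      exact mul_left_cancel₀ hu (by linarith)
    refine ⟨?_, by linarith, by rw [hvw]; linarith⟩
    have habs : (‖u * v * w‖ : ℝ) = ‖u‖ * ‖v‖ ^ 2 := by
      simp [norm_mul, hvw]; ring
    rw [habs]
    calc u * v * w = v * (u * w) := by ring
      _ = v * (ε * (starRingEnd ℂ) v * (‖u‖ : ℂ)) := by rw [h2]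
      _ = ε * ((‖u‖ * ‖v‖ ^ 2 : ℝ) : ℂ) := by
          push_cast
          linear_combination (ε * (‖u‖ : ℂ)) * (hvc v)

lemma HL_helperB (t : ℝ) (ht : t < 0) (ε : ℂ) (hε : ε = 1 ∨ ε = -1) (u v w : ℂ) :
    (u * v * w = ε * (‖u * v * w‖ : ℂ) ∧
      ‖u‖ ^ 2 - ‖v‖ ^ 2 = t ∧
      ‖u‖ ^ 2 - ‖w‖ ^ 2 = 0) ↔
    (‖v‖ ^ 2 = ‖u‖ ^ 2 + (-t) ∧
      v * w = ε * (starRingEnd ℂ) u * (‖v‖ : ℂ)) := by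
  have hεa : ‖ε‖ = 1 := by rcases hε with rfl | rfl <;> simp
  have hvc : ∀ x : ℂ, x * (starRingEnd ℂ) x = (‖x‖ : ℂ) ^ 2 := by
    intro x; rw [Complex.mul_conj]; norm_cast; rw [Complex.sq_norm]
  constructor
  · rintro ⟨hP, h1, h2⟩
    have huw : ‖u‖ = ‖w‖ :=
      HL_sq_eq (norm_nonneg _) (norm_nonneg _) (by linarith)
    refine ⟨by linarith, ?_⟩
    rcases eq_or_ne u 0 with rfl | hu
    · have hw : w = 0 := by
        have : ‖w‖ = 0 := by simpa using huw.symm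
        simpa using this
      simp [hw]
    · apply mul_left_cancel₀ hu
      have habs : (‖u * v * w‖ : ℝ) = ‖u‖ ^ 2 * ‖v‖ := by
        simp [norm_mul, ← huw]; ring
      calc u * (v * w) = u * v * w := by ring
        _ = ε * ((‖u‖ ^ 2 * ‖v‖ : ℝ) : ℂ) := by rw [hP, habs]
        _ = u * (ε * (starRingEnd ℂ) u * (‖v‖ : ℂ)) := by
            push_cast
            linear_combination (-(ε * (‖v‖ : ℂ))) * (hvc u)
  · rintro ⟨h1, h2⟩
    have hv : ‖v‖ ≠ 0 := by
      intro h; rw [h] at h1; nlinarith [norm_nonneg u]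
    have huw : ‖w‖ = ‖u‖ := by
      have := congrArg norm h2
      simp only [norm_mul, Complex.norm_conj, Complex.norm_real, Real.norm_eq_abs, hεa,
        _root_.abs_of_nonneg (norm_nonneg v), one_mul] at this
      exact mul_left_cancel₀ hv (by linarith)
    refine ⟨?_, by linarith, by rw [huw]; ring⟩
    have habs : (‖u * v * w‖ : ℝ) = ‖u‖ ^ 2 * ‖v‖ := by
      simp [norm_mul, huw]; ring
    rw [habs]
    calc u * v * w = u * (v * w) := by ring
      _ = u * (ε * (starRingEnd ℂ) u * (‖v‖ : ℂ)) := by rw [h2]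
      _ = ε * ((‖u‖ ^ 2 * ‖v‖ : ℝ) : ℂ) := by
          push_cast
          linear_combination (ε * (‖v‖ : ℂ)) * (hvc u)


lemma HL_core (S : Set (Fin 3 → ℂ)) (k : ℝ) (hk : 0 < k) (ε : ℂ)
    (a b c : Fin 3) (R : ℂ → ℂ → ℂ → (Fin 3 → ℂ))
    (hRcont : Continuous fun p : ℂ × ℂ × ℂ => R p.1 p.2.1 p.2.2)
    (hRa : ∀ x y w, R x y w a = x)
    (hRb : ∀ x y w, R x y w b = y)
    (hRc : ∀ x y w, R x y w c = w)
    (hR : ∀ z : Fin 3 → ℂ, R (z a) (z b) (z c) = z)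
    (hS : ∀ z : Fin 3 → ℂ, z ∈ S ↔
      ‖z b‖ ^ 2 = ‖z a‖ ^ 2 + k ∧
      z b * z c = ε * (starRingEnd ℂ) (z a) * (‖z b‖ : ℂ)) :
    Nonempty (S ≃ₜ (Metric.sphere (0 : ℂ) 1 × ℝ × ℝ)) := by
  -- on S, z b ≠ 0
  have hb0 : ∀ z : Fin 3 → ℂ, z ∈ S → z b ≠ 0 := by
    intro z hz h
    have h1 := ((hS z).1 hz).1
    rw [h] at h1
    simp at h1
    nlinarith [norm_nonneg (z a)]
  -- the homeomorphism with S¹ × ℂ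
  have main : Nonempty (S ≃ₜ (Metric.sphere (0 : ℂ) 1 × ℂ)) := by
    refine ⟨{
      toFun := fun z => (⟨z.1 b / (‖z.1 b‖ : ℂ), ?_⟩, z.1 a)
      invFun := fun p => ⟨R p.2 ((Real.sqrt (‖p.2‖ ^ 2 + k) : ℝ) * (p.1 : ℂ))
        (ε * (starRingEnd ℂ) p.2 * (starRingEnd ℂ) (p.1 : ℂ)), ?_⟩
      left_inv := ?_
      right_inv := ?_
      continuous_toFun := ?_
      continuous_invFun := ?_ }⟩
    · -- sphere membership
      have hb := hb0 z.1 z.2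
      rw [mem_sphere_zero_iff_norm]
      rw [norm_div]
      simp only [Complex.norm_real, Real.norm_eq_abs,
        _root_.abs_of_nonneg (norm_nonneg (z.1 b))]
      field_simp [hb]
    · -- membership of invFun in S
      obtain ⟨⟨u, hu⟩, w⟩ := p
      rw [mem_sphere_zero_iff_norm] at hu
      have hu' : ‖u‖ = 1 := by exact hu
      have hsq : 0 ≤ ‖w‖ ^ 2 + k := by positivity
      rw [hS]
      rw [hRa, hRb, hRc]
      constructor
      · rw [norm_mul]
        simp only [Complex.norm_real, Real.norm_eq_abs, hu', mul_one,
          _root_.abs_of_nonneg (Real.sqrt_nonneg _)]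
        rw [Real.sq_sqrt hsq]
      · rw [norm_mul]
        simp only [Complex.norm_real, Real.norm_eq_abs, hu', mul_one,
          _root_.abs_of_nonneg (Real.sqrt_nonneg _)]
        have huc : u * (starRingEnd ℂ) u = 1 := by
          rw [Complex.mul_conj]
          norm_cast
          rw [← Complex.sq_norm, hu']; norm_num
        linear_combination (((Real.sqrt (‖w‖ ^ 2 + k) : ℝ) : ℂ) * ε *
          (starRingEnd ℂ) w) * huc
    · -- left inverse
      rintro ⟨z, hz⟩
      have hb := hb0 z hz
      have hba : (‖z b‖ : ℂ) ≠ 0 := by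
        simpa using (norm_ne_zero_iff.mpr hb)
      obtain ⟨h1, h2⟩ := (hS z).1 hz
      ext1
      simp only
      have hsqrt : Real.sqrt (‖z a‖ ^ 2 + k) = ‖z b‖ := by
        rw [← h1, Real.sqrt_sq (norm_nonneg _)]
      rw [hsqrt]
      have e2 : (‖z b‖ : ℂ) * (z b / (‖z b‖ : ℂ)) = z b := by
        field_simp
      have e3 : ε * (starRingEnd ℂ) (z a) *
          (starRingEnd ℂ) (z b / (‖z b‖ : ℂ)) = z c := by
        apply mul_left_cancel₀ hb
        rw [h2]
        rw [map_div₀]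
        have : (starRingEnd ℂ) ((‖z b‖ : ℝ) : ℂ) = (‖z b‖ : ℂ) := by
          rw [Complex.conj_ofReal]
        rw [this]
        have hcc : z b * (starRingEnd ℂ) (z b) = ((‖z b‖ : ℂ)) ^ 2 := by
          rw [Complex.mul_conj]
          norm_cast
          rw [Complex.sq_norm]
        field_simp
        linear_combination (ε * (starRingEnd ℂ) (z a)) * hcc
      rw [e2, e3, hR]
    · -- right inverse
      rintro ⟨⟨u, hu⟩, w⟩
      rw [mem_sphere_zero_iff_norm] at hu
      have hu' : ‖u‖ = 1 := by exact hu
      have hs0 : Real.sqrt (‖w‖ ^ 2 + k) ≠ 0 := by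
        refine ne_of_gt (Real.sqrt_pos.2 ?_)
        positivity
      simp only [hRa, hRb, hRc]
      have habs : ‖((Real.sqrt (‖w‖ ^ 2 + k) : ℝ) : ℂ) * u‖
          = Real.sqrt (‖w‖ ^ 2 + k) := by
        rw [norm_mul, hu', mul_one, Complex.norm_real, Real.norm_eq_abs,
          _root_.abs_of_nonneg (Real.sqrt_nonneg _)]
      refine Prod.ext (Subtype.ext ?_) rfl
      simp only [habs]
      rw [mul_comm, mul_div_assoc]
      rw [div_self (by exact_mod_cast hs0)]
      rw [mul_one]
    · -- continuity of toFun
      apply Continuous.prodMk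
      · apply Continuous.subtype_mk
        apply Continuous.div
        · exact (continuous_apply b).comp continuous_subtype_val
        · exact Complex.continuous_ofReal.comp
            (continuous_norm.comp ((continuous_apply b).comp continuous_subtype_val))
        · intro z
          have hb := hb0 z.1 z.2
          simpa using (norm_ne_zero_iff.mpr hb)
      · exact (continuous_apply a).comp continuous_subtype_val
    · -- continuity of invFun
      apply Continuous.subtype_mk
      have hcu : Continuous fun p : (Metric.sphere (0 : ℂ) 1) × ℂ => (p.1 : ℂ) :=
        continuous_subtype_val.comp continuous_fst
      have hcw : Continuous fun p : (Metric.sphere (0 : ℂ) 1) × ℂ => p.2 := continuous_snd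
      have hg : Continuous fun p : (Metric.sphere (0 : ℂ) 1) × ℂ =>
          ((p.2, (((Real.sqrt (‖p.2‖ ^ 2 + k) : ℝ) : ℂ) * (p.1 : ℂ),
            ε * (starRingEnd ℂ) p.2 * (starRingEnd ℂ) (p.1 : ℂ))) : ℂ × ℂ × ℂ) := by
        refine Continuous.prodMk hcw (Continuous.prodMk ?_ ?_)
        · exact (Complex.continuous_ofReal.comp ((Real.continuous_sqrt).comp
            (((continuous_norm.comp hcw).pow 2).add continuous_const))).mul hcu
        · exact (continuous_const.mul (Complex.continuous_conj.comp hcw)).mul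
            (Complex.continuous_conj.comp hcu)
      exact hRcont.comp hg
  obtain ⟨e⟩ := main
  exact ⟨e.trans ((Homeomorph.refl _).prodCongr Complex.equivRealProdCLM.toHomeomorph)⟩
lemma HL_eq_iff (z : Fin 3 → ℂ) (p q r : ℝ) :
    HarveyLawson z = ![p, q, r] ↔
      ((z 0 * z 1 * z 2).im = p ∧
        ‖z 0‖ ^ 2 - ‖z 1‖ ^ 2 = q ∧
        ‖z 0‖ ^ 2 - ‖z 2‖ ^ 2 = r) := by
  constructor
  · intro h
    exact ⟨congrFun h 0, congrFun h 1, congrFun h 2⟩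
  · rintro ⟨h0, h1, h2⟩
    funext i
    fin_cases i
    · exact h0
    · exact h1
    · exact h2

theorem harveyLawson_singular_fiber_halves_homeo
    (x₂ x₃ : ℝ) (hx : (![0, x₂, x₃] : Fin 3 → ℝ) ∈ HLDiscriminant)
    (hx0 : ¬(x₂ = 0 ∧ x₃ = 0)) :
    Nonempty (((HarveyLawson ⁻¹' {![0, x₂, x₃]}) ∩
        {z : Fin 3 → ℂ | 0 ≤ (z 0 * z 1 * z 2).re} : Set (Fin 3 → ℂ)) ≃ₜ
        (Metric.sphere (0 : ℂ) 1 × ℝ × ℝ)) ∧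
    Nonempty (((HarveyLawson ⁻¹' {![0, x₂, x₃]}) ∩
        {z : Fin 3 → ℂ | (z 0 * z 1 * z 2).re ≤ 0} : Set (Fin 3 → ℂ)) ≃ₜ
        (Metric.sphere (0 : ℂ) 1 × ℝ × ℝ)) := by
  rcases hx with (⟨t, ht, heq⟩ | ⟨t, ht, heq⟩) | ⟨t, ht, heq⟩
  · -- branch 1 : x = (0, t, t), 0 < t
    have hx2 : x₂ = t := by simpa using congrFun heq 1
    have hx3 : x₃ = t := by simpa using congrFun heq 2
    have ht' : 0 < t := by
      rcases lt_or_eq_of_le ht with h | h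
      · exact h
      · exact absurd ⟨by rw [hx2, ← h], by rw [hx3, ← h]⟩ hx0
    have Rcont : Continuous fun p : ℂ × ℂ × ℂ => ![p.2.1, p.1, p.2.2] := by
      refine continuous_pi fun i => ?_
      fin_cases i
      · exact continuous_fst.comp continuous_snd
      · exact continuous_fst
      · exact continuous_snd.comp continuous_snd
    constructor
    · refine HL_core _ t ht' 1 1 0 2 (fun x y w => ![y, x, w]) Rcont
        (by intros; simp) (by intros; simp) (by intros; simp)
        (fun z => by funext i; fin_cases i <;> simp) ?_
      intro z
      have hA := HL_helperA t ht' 1 (Or.inl rfl) (z 0) (z 1) (z 2)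
      have hs := HL_sign_iff 1 (Or.inl rfl) (z 0 * z 1 * z 2)
      simp only [Set.mem_inter_iff, Set.mem_preimage, Set.mem_singleton_iff,
        Set.mem_setOf_eq, HL_eq_iff, hx2, hx3]
      constructor
      · rintro ⟨⟨h0, h1, h2⟩, hre⟩
        exact hA.1 ⟨hs.1 ⟨h0, by simpa using hre⟩, h1, h2⟩
      · intro h
        obtain ⟨hP, h1, h2⟩ := hA.2 h
        obtain ⟨h0, hre⟩ := hs.2 hP
        exact ⟨⟨h0, h1, h2⟩, by simpa using hre⟩
    · refine HL_core _ t ht' (-1) 1 0 2 (fun x y w => ![y, x, w]) Rcont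
        (by intros; simp) (by intros; simp) (by intros; simp)
        (fun z => by funext i; fin_cases i <;> simp) ?_
      intro z
      have hA := HL_helperA t ht' (-1) (Or.inr rfl) (z 0) (z 1) (z 2)
      have hs := HL_sign_iff (-1) (Or.inr rfl) (z 0 * z 1 * z 2)
      simp only [Set.mem_inter_iff, Set.mem_preimage, Set.mem_singleton_iff,
        Set.mem_setOf_eq, HL_eq_iff, hx2, hx3]
      constructor
      · rintro ⟨⟨h0, h1, h2⟩, hre⟩
        refine hA.1 ⟨hs.1 ⟨h0, ?_⟩, h1, h2⟩
        simp only [Complex.neg_re, Complex.one_re]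
        nlinarith
      · intro h
        obtain ⟨hP, h1, h2⟩ := hA.2 h
        obtain ⟨h0, hre⟩ := hs.2 hP
        refine ⟨⟨h0, h1, h2⟩, ?_⟩
        simp only [Complex.neg_re, Complex.one_re] at hre
        nlinarith
  · -- branch 2 : x = (0, t, 0), t < 0
    have hx2 : x₂ = t := by simpa using congrFun heq 1
    have hx3 : x₃ = 0 := by simpa using congrFun heq 2
    have ht' : t < 0 := by
      rcases lt_or_eq_of_le ht with h | h
      · exact h
      · exact absurd ⟨by rw [hx2, h], hx3⟩ hx0
    have hk : 0 < -t := by linarith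
    have Rcont : Continuous fun p : ℂ × ℂ × ℂ => ![p.1, p.2.1, p.2.2] := by
      refine continuous_pi fun i => ?_
      fin_cases i
      · exact continuous_fst
      · exact continuous_fst.comp continuous_snd
      · exact continuous_snd.comp continuous_snd
    constructor
    · refine HL_core _ (-t) hk 1 0 1 2 (fun x y w => ![x, y, w]) Rcont
        (by intros; simp) (by intros; simp) (by intros; simp)
        (fun z => by funext i; fin_cases i <;> simp) ?_
      intro z
      have hA := HL_helperB t ht' 1 (Or.inl rfl) (z 0) (z 1) (z 2)
      have hs := HL_sign_iff 1 (Or.inl rfl) (z 0 * z 1 * z 2)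
      simp only [Set.mem_inter_iff, Set.mem_preimage, Set.mem_singleton_iff,
        Set.mem_setOf_eq, HL_eq_iff, hx2, hx3]
      constructor
      · rintro ⟨⟨h0, h1, h2⟩, hre⟩
        exact hA.1 ⟨hs.1 ⟨h0, by simpa using hre⟩, h1, h2⟩
      · intro h
        obtain ⟨hP, h1, h2⟩ := hA.2 h
        obtain ⟨h0, hre⟩ := hs.2 hP
        exact ⟨⟨h0, h1, h2⟩, by simpa using hre⟩
    · refine HL_core _ (-t) hk (-1) 0 1 2 (fun x y w => ![x, y, w]) Rcont
        (by intros; simp) (by intros; simp) (by intros; simp)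
        (fun z => by funext i; fin_cases i <;> simp) ?_
      intro z
      have hA := HL_helperB t ht' (-1) (Or.inr rfl) (z 0) (z 1) (z 2)
      have hs := HL_sign_iff (-1) (Or.inr rfl) (z 0 * z 1 * z 2)
      simp only [Set.mem_inter_iff, Set.mem_preimage, Set.mem_singleton_iff,
        Set.mem_setOf_eq, HL_eq_iff, hx2, hx3]
      constructor
      · rintro ⟨⟨h0, h1, h2⟩, hre⟩
        refine hA.1 ⟨hs.1 ⟨h0, ?_⟩, h1, h2⟩
        simp only [Complex.neg_re, Complex.one_re]
        nlinarith
      · intro h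
        obtain ⟨hP, h1, h2⟩ := hA.2 h
        obtain ⟨h0, hre⟩ := hs.2 hP
        refine ⟨⟨h0, h1, h2⟩, ?_⟩
        simp only [Complex.neg_re, Complex.one_re] at hre
        nlinarith
  · -- branch 3 : x = (0, 0, t), t < 0
    have hx2 : x₂ = 0 := by simpa using congrFun heq 1
    have hx3 : x₃ = t := by simpa using congrFun heq 2
    have ht' : t < 0 := by
      rcases lt_or_eq_of_le ht with h | h
      · exact h
      · exact absurd ⟨hx2, by rw [hx3, h]⟩ hx0
    have hk : 0 < -t := by linarith
    have Rcont : Continuous fun p : ℂ × ℂ × ℂ => ![p.1, p.2.2, p.2.1] := by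
      refine continuous_pi fun i => ?_
      fin_cases i
      · exact continuous_fst
      · exact continuous_snd.comp continuous_snd
      · exact continuous_fst.comp continuous_snd
    have hcomm : ∀ z : Fin 3 → ℂ, z 0 * z 2 * z 1 = z 0 * z 1 * z 2 := fun z => by ring
    constructor
    · refine HL_core _ (-t) hk 1 0 2 1 (fun x y w => ![x, w, y]) Rcont
        (by intros; simp) (by intros; simp) (by intros; simp)
        (fun z => by funext i; fin_cases i <;> simp) ?_
      intro z
      have hA := HL_helperB t ht' 1 (Or.inl rfl) (z 0) (z 2) (z 1)
      rw [hcomm z] at hA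
      have hs := HL_sign_iff 1 (Or.inl rfl) (z 0 * z 1 * z 2)
      simp only [Set.mem_inter_iff, Set.mem_preimage, Set.mem_singleton_iff,
        Set.mem_setOf_eq, HL_eq_iff, hx2, hx3]
      constructor
      · rintro ⟨⟨h0, h1, h2⟩, hre⟩
        exact hA.1 ⟨hs.1 ⟨h0, by simpa using hre⟩, h2, h1⟩
      · intro h
        obtain ⟨hP, h2, h1⟩ := hA.2 h
        obtain ⟨h0, hre⟩ := hs.2 hP
        exact ⟨⟨h0, h1, h2⟩, by simpa using hre⟩
    · refine HL_core _ (-t) hk (-1) 0 2 1 (fun x y w => ![x, w, y]) Rcont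
        (by intros; simp) (by intros; simp) (by intros; simp)
        (fun z => by funext i; fin_cases i <;> simp) ?_
      intro z
      have hA := HL_helperB t ht' (-1) (Or.inr rfl) (z 0) (z 2) (z 1)
      rw [hcomm z] at hA
      have hs := HL_sign_iff (-1) (Or.inr rfl) (z 0 * z 1 * z 2)
      simp only [Set.mem_inter_iff, Set.mem_preimage, Set.mem_singleton_iff,
        Set.mem_setOf_eq, HL_eq_iff, hx2, hx3]
      constructor
      · rintro ⟨⟨h0, h1, h2⟩, hre⟩
        refine hA.1 ⟨hs.1 ⟨h0, ?_⟩, h2, h1⟩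
        simp only [Complex.neg_re, Complex.one_re]
        nlinarith
      · intro h
        obtain ⟨hP, h2, h1⟩ := hA.2 h
        obtain ⟨h0, hre⟩ := hs.2 hP
        refine ⟨⟨h0, h1, h2⟩, ?_⟩
        simp only [Complex.neg_re, Complex.one_re] at hre
        nlinarith
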